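/- For any 2-dimensional checkerboard measure P̌ with copula-array skeleton p (n×n, uniform margins), the Spearman rho value ρ(P̌) = ∫_{[0,1]^2} 12(v_1 − 1/2)(v_2 − 1/2) dP̌(v) equals Σ_{i∈[n]^2} p_i · 12(c_{i_1} − 1/2)(c_{i_2} − 1/2) where c_j = (j − 1/2)/n, and this value lies in the interval [−1 + 1/n², 1 − 1/n²]. -/

import Mathlib

open MeasureTheory Real BigOperators

noncomputable def intA (n : ℕ) (j : Fin n) : Set ℝ :=
  if j.val = 0 then Set.Icc 0 (1 / n) else Set.Ioc ((j.val : ℝ) / n) (((j.val : ℝ) + 1) / n)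

noncomputable def box (d n : ℕ) (i : Fin d → Fin n) : Set (Fin d → ℝ) :=
  Set.univ.pi fun ℓ => intA n (i ℓ)

noncomputable def checkMeasure (d n : ℕ) (p : (Fin d → Fin n) → ℝ) :
    Measure (Fin d → ℝ) :=
  volume.withDensity fun v =>
    ENNReal.ofReal ((n : ℝ) ^ d *
      ∑ i : Fin d → Fin n, (box d n i).indicator (fun _ => p i) v)

def IsProbArray {d n : ℕ} (p : (Fin d → Fin n) → ℝ) : Prop :=
  (∀ i, 0 ≤ p i) ∧ ∑ i : Fin d → Fin n, p i = 1

def IsCopulaArray {d n : ℕ} (p : (Fin d → Fin n) → ℝ) : Prop :=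
  IsProbArray p ∧
    ∀ (ℓ : Fin d) (a : Fin n),
      ∑ i ∈ Finset.univ.filter (fun i : Fin d → Fin n => i ℓ = a), p i = 1 / n

section Aux

open scoped NNReal ENNReal

lemma intA_integral' (n : ℕ) (hn : 0 < n) (j : Fin n) :
    ∫ x in intA n j, (x - 1/2) = (1/n) * (((j:ℝ) + 1/2)/n - 1/2) := by
  have hn' : (0:ℝ) < n := by exact_mod_cast hn
  have key : ∀ a b : ℝ, a ≤ b → ∫ x in Set.Ioc a b, (x - 1/2) = (b^2 - a^2)/2 - (b - a)/2 := by
    intro a b hab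
    rw [← intervalIntegral.integral_of_le hab,
      intervalIntegral.integral_sub (intervalIntegral.intervalIntegrable_id)
        (intervalIntegrable_const),
      integral_id, intervalIntegral.integral_const, smul_eq_mul]
    ring
  by_cases h : j.val = 0
  · rw [intA, if_pos h, MeasureTheory.integral_Icc_eq_integral_Ioc, key 0 (1/n) (by positivity)]
    rw [h]; push_cast; field_simp; ring
  · rw [intA, if_neg h, key _ _ (by
      exact (div_le_div_iff_of_pos_right hn').mpr (by linarith))]
    field_simp; ring

lemma measurableSet_intA' (n : ℕ) (j : Fin n) : MeasurableSet (intA n j) := by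
  unfold intA; split <;> [exact measurableSet_Icc; exact measurableSet_Ioc]

lemma intA_subset' (n : ℕ) (hn : 0 < n) (j : Fin n) : intA n j ⊆ Set.Icc 0 1 := by
  have hn' : (0:ℝ) < n := by exact_mod_cast hn
  have hj : (j:ℝ) + 1 ≤ n := by exact_mod_cast j.2
  unfold intA; split
  · exact Set.Icc_subset_Icc le_rfl (by rw [div_le_one hn']; exact_mod_cast hn)
  · intro x hx
    constructor
    · exact le_trans (by positivity) (le_of_lt hx.1)
    · exact hx.2.trans ((div_le_one hn').mpr hj)

lemma measurableSet_box' (d n : ℕ) (i : Fin d → Fin n) : MeasurableSet (box d n i) :=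
  MeasurableSet.univ_pi fun ℓ => measurableSet_intA' n (i ℓ)

lemma box_subset' (d n : ℕ) (hn : 0 < n) (i : Fin d → Fin n) :
    box d n i ⊆ Set.Icc 0 1 := by
  intro v hv
  rw [Set.mem_Icc]
  constructor <;> intro ℓ <;>
    [exact (intA_subset' n hn (i ℓ) (hv ℓ trivial)).1;
     exact (intA_subset' n hn (i ℓ) (hv ℓ trivial)).2]

lemma checkIntegral_sum (n : ℕ) (hn : 0 < n) (p : (Fin 2 → Fin n) → ℝ)
    (hp0 : ∀ i, 0 ≤ p i) :
    ∫ v, 12 * (v 0 - 1 / 2) * (v 1 - 1 / 2) ∂(checkMeasure 2 n p)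
      = ∑ i : Fin 2 → Fin n, (n:ℝ)^2 * p i *
          ∫ v in box 2 n i, 12 * (v 0 - 1 / 2) * (v 1 - 1 / 2) := by
  set F : (Fin 2 → ℝ) → ℝ := fun v => 12 * (v 0 - 1 / 2) * (v 1 - 1 / 2) with hF
  set g : (Fin 2 → ℝ) → ℝ := fun v =>
    (n : ℝ) ^ 2 * ∑ i : Fin 2 → Fin n, (box 2 n i).indicator (fun _ => p i) v with hg
  have hg0 : ∀ v, 0 ≤ g v := by
    intro v
    apply mul_nonneg (by positivity)
    exact Finset.sum_nonneg fun i _ => Set.indicator_nonneg (fun _ _ => hp0 i) v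
  have hgm : Measurable g := by
    apply Measurable.const_mul
    exact Finset.measurable_sum _ fun i _ =>
      (measurable_const.indicator (measurableSet_box' 2 n i))
  have hFc : Continuous F := by fun_prop
  have step1 : ∫ v, F v ∂(checkMeasure 2 n p) = ∫ v, g v * F v := by
    rw [checkMeasure]
    have : (fun v => ENNReal.ofReal ((n : ℝ) ^ 2 *
        ∑ i : Fin 2 → Fin n, (box 2 n i).indicator (fun _ => p i) v))
        = fun v => ((Real.toNNReal (g v) : ℝ≥0) : ℝ≥0∞) := rfl
    rw [this, integral_withDensity_eq_integral_smul (hgm.real_toNNReal) F]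
    congr 1; ext v
    rw [NNReal.smul_def, smul_eq_mul, Real.coe_toNNReal _ (hg0 v)]
  rw [step1]
  have step2 : ∀ v, g v * F v = ∑ i : Fin 2 → Fin n,
      (box 2 n i).indicator (fun w => (n:ℝ)^2 * p i * F w) v := by
    intro v
    simp only [hg]
    rw [Finset.mul_sum, Finset.sum_mul]
    congr 1; ext i
    by_cases hv : v ∈ box 2 n i <;>
      simp [Set.indicator_of_mem, Set.indicator_of_notMem, hv, mul_assoc, mul_comm]
  simp_rw [step2]
  rw [integral_finset_sum]
  · congr 1; ext i
    rw [integral_indicator (measurableSet_box' 2 n i), MeasureTheory.integral_const_mul]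
  · intro i _
    apply (IntegrableOn.integrable_indicator ?_ (measurableSet_box' 2 n i))
    apply IntegrableOn.mono_set ?_ (box_subset' 2 n hn i)
    apply ContinuousOn.integrableOn_compact isCompact_Icc
    exact (continuous_const.mul hFc).continuousOn

lemma box_integral_eq (n : ℕ) (i : Fin 2 → Fin n) :
    ∫ v in box 2 n i, 12 * (v 0 - 1/2) * (v 1 - 1/2)
      = (∫ x in intA n (i 0), 12 * (x - 1/2)) * (∫ y in intA n (i 1), (y - 1/2)) := by
  have hvp := volume_preserving_finTwoArrow ℝ
  have hbox : box 2 n i = (MeasurableEquiv.finTwoArrow (α := ℝ)) ⁻¹'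
      ((intA n (i 0)) ×ˢ (intA n (i 1))) := by
    ext v
    simp [box, Set.mem_pi, MeasurableEquiv.finTwoArrow, Fin.forall_fin_two]
  have key := MeasureTheory.MeasurePreserving.setIntegral_preimage_emb hvp
    (MeasurableEquiv.finTwoArrow (α := ℝ)).measurableEmbedding
    (fun y : ℝ × ℝ => (12 * (y.1 - 1/2)) * (y.2 - 1/2))
    ((intA n (i 0)) ×ˢ (intA n (i 1)))
  rw [hbox]
  rw [show (∫ v in (MeasurableEquiv.finTwoArrow (α := ℝ)) ⁻¹'
      ((intA n (i 0)) ×ˢ (intA n (i 1))), 12 * (v 0 - 1/2) * (v 1 - 1/2)) =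
    ∫ v in (MeasurableEquiv.finTwoArrow (α := ℝ)) ⁻¹' ((intA n (i 0)) ×ˢ (intA n (i 1))),
      (fun y : ℝ × ℝ => (12 * (y.1 - 1/2)) * (y.2 - 1/2))
        ((MeasurableEquiv.finTwoArrow (α := ℝ)) v) from rfl, key, Measure.volume_eq_prod,
    MeasureTheory.setIntegral_prod_mul (fun x => 12 * (x - 1/2)) (fun y => y - 1/2)]

lemma marginal_sum' {d n : ℕ} {p : (Fin d → Fin n) → ℝ} (hp : IsCopulaArray p)
    (ℓ : Fin d) (g : Fin n → ℝ) :
    ∑ i : Fin d → Fin n, p i * g (i ℓ) = (1 / n) * ∑ a : Fin n, g a := by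
  rw [← Finset.sum_fiberwise Finset.univ (fun i : Fin d → Fin n => i ℓ)
    (fun i => p i * g (i ℓ))]
  rw [Finset.mul_sum]
  refine Finset.sum_congr rfl fun a _ => ?_
  have : ∑ i ∈ Finset.univ.filter (fun i : Fin d → Fin n => i ℓ = a), p i * g (i ℓ)
      = ∑ i ∈ Finset.univ.filter (fun i : Fin d → Fin n => i ℓ = a), p i * g a := by
    refine Finset.sum_congr rfl fun i hi => ?_
    rw [(Finset.mem_filter.mp hi).2]
  rw [this, ← Finset.sum_mul, hp.2 ℓ a]

lemma sum_range_sq' (n : ℕ) : ∑ j ∈ Finset.range n, (j:ℝ)^2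
    = n * (n - 1) * (2 * n - 1) / 6 := by
  induction n with
  | zero => simp
  | succ m ih => rw [Finset.sum_range_succ, ih]; push_cast; ring

lemma sum_range_id'' (n : ℕ) : ∑ j ∈ Finset.range n, (j:ℝ) = n * (n - 1) / 2 := by
  induction n with
  | zero => simp
  | succ m ih => rw [Finset.sum_range_succ, ih]; push_cast; ring

lemma sum_sq_centers' (n : ℕ) (hn : 0 < n) :
    ∑ j : Fin n, (((j:ℝ) + 1/2)/n - 1/2)^2 = ((n:ℝ)^2 - 1) / (12 * n) := by
  have hn' : (0:ℝ) < n := by exact_mod_cast hn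
  rw [Fin.sum_univ_eq_sum_range (fun j => (((j:ℝ) + 1/2)/n - 1/2)^2)]
  have expand : ∀ j : ℕ, (((j:ℝ) + 1/2)/n - 1/2)^2
      = (j:ℝ)^2 / n^2 + (j:ℝ) * ((1 - n) / n^2) + ((1 - n)/(2*n))^2 := by
    intro j; field_simp; ring
  simp_rw [expand]
  rw [Finset.sum_add_distrib, Finset.sum_add_distrib, ← Finset.sum_div,
    ← Finset.sum_mul, sum_range_sq', sum_range_id'', Finset.sum_const,
    Finset.card_range]
  field_simp
  have hne : (n:ℝ) ≠ 0 := hn'.ne'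
  ring_nf
  field_simp
  ring

end Aux

/-- Spearman's rho of a bivariate checkerboard measure with copula-array
skeleton `p` equals the weighted sum of the Spearman kernel at the box
centers `c_j = (j + 1/2)/n` (`0`-based), and lies in `[−1+1/n², 1−1/n²]`. -/
theorem spearman_rho_of_checkerboard
    (n : ℕ) (hn : 2 ≤ n)
    (p : (Fin 2 → Fin n) → ℝ) (hp : IsCopulaArray p) :
    (∫ v, 12 * (v 0 - 1 / 2) * (v 1 - 1 / 2) ∂(checkMeasure 2 n p)
      = ∑ i : Fin 2 → Fin n,
          p i * (12 * (((i 0 : ℝ) + 1 / 2) / n - 1 / 2) *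
            (((i 1 : ℝ) + 1 / 2) / n - 1 / 2))) ∧
    (∫ v, 12 * (v 0 - 1 / 2) * (v 1 - 1 / 2) ∂(checkMeasure 2 n p))
      ∈ Set.Icc (-1 + 1 / (n : ℝ) ^ 2) (1 - 1 / (n : ℝ) ^ 2) := by
  have hn0 : 0 < n := by omega
  have hn' : (0:ℝ) < n := by exact_mod_cast hn0
  set c : Fin n → ℝ := fun j => ((j:ℝ) + 1/2)/n - 1/2 with hc
  -- Part 1 : the integral equals the sum
  have part1 : ∫ v, 12 * (v 0 - 1 / 2) * (v 1 - 1 / 2) ∂(checkMeasure 2 n p)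
      = ∑ i : Fin 2 → Fin n, p i * (12 * c (i 0) * c (i 1)) := by
    rw [checkIntegral_sum n hn0 p hp.1.1]
    refine Finset.sum_congr rfl fun i _ => ?_
    rw [box_integral_eq n i, MeasureTheory.integral_const_mul,
      intA_integral' n hn0 (i 0), intA_integral' n hn0 (i 1)]
    simp only [hc]
    field_simp
  -- marginal second moments
  have hmarg : ∀ ℓ : Fin 2, ∑ i : Fin 2 → Fin n, p i * (c (i ℓ))^2
      = ((n:ℝ)^2 - 1) / (12 * n^2) := by
    intro ℓ
    rw [marginal_sum' hp ℓ (fun a => (c a)^2)]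
    simp only [hc]
    rw [sum_sq_centers' n hn0, div_mul_div_comm, one_mul]
    congr 1
    ring
  set S : ℝ := ∑ i : Fin 2 → Fin n, p i * (12 * c (i 0) * c (i 1)) with hS
  have hQm : (0:ℝ) ≤ ∑ i : Fin 2 → Fin n, p i * (c (i 0) - c (i 1))^2 :=
    Finset.sum_nonneg fun i _ => mul_nonneg (hp.1.1 i) (sq_nonneg _)
  have hQp : (0:ℝ) ≤ ∑ i : Fin 2 → Fin n, p i * (c (i 0) + c (i 1))^2 :=
    Finset.sum_nonneg fun i _ => mul_nonneg (hp.1.1 i) (sq_nonneg _)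
  have hid1 : S = 6 * (∑ i : Fin 2 → Fin n, p i * (c (i 0))^2)
      + 6 * (∑ i : Fin 2 → Fin n, p i * (c (i 1))^2)
      - 6 * (∑ i : Fin 2 → Fin n, p i * (c (i 0) - c (i 1))^2) := by
    rw [hS, Finset.mul_sum, Finset.mul_sum, Finset.mul_sum,
      ← Finset.sum_add_distrib, ← Finset.sum_sub_distrib]
    exact Finset.sum_congr rfl fun i _ => by ring
  have hid2 : S = 6 * (∑ i : Fin 2 → Fin n, p i * (c (i 0) + c (i 1))^2)
      - 6 * (∑ i : Fin 2 → Fin n, p i * (c (i 0))^2)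
      - 6 * (∑ i : Fin 2 → Fin n, p i * (c (i 1))^2) := by
    rw [hS, Finset.mul_sum, Finset.mul_sum, Finset.mul_sum,
      ← Finset.sum_sub_distrib, ← Finset.sum_sub_distrib]
    exact Finset.sum_congr rfl fun i _ => by ring
  have hub : S ≤ 1 - 1/(n:ℝ)^2 := by
    rw [hid1, hmarg 0, hmarg 1]
    have h12 : 6 * (((n:ℝ)^2 - 1) / (12 * n^2)) + 6 * (((n:ℝ)^2 - 1) / (12 * n^2))
        = 1 - 1/(n:ℝ)^2 := by field_simp; ring
    linarith
  have hlb : -1 + 1/(n:ℝ)^2 ≤ S := by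
    rw [hid2, hmarg 0, hmarg 1]
    have h12 : -(6 * (((n:ℝ)^2 - 1) / (12 * n^2))) - 6 * (((n:ℝ)^2 - 1) / (12 * n^2))
        = -1 + 1/(n:ℝ)^2 := by
      field_simp
      ring
    linarith
  constructor
  · rw [part1]
  · rw [part1, Set.mem_Icc]
    exact ⟨hlb, hub⟩
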